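/- Define D̂ = λ(Σ12² + Σ13²) + 2Σ12Σ13 and Z2 = A⁴N²G+⁵D̂² / ((1−V²)^{5(2−γ)/2}·Ω⁵). Along any solution of the tilted Bianchi type VI_{-1/9} system with Ω(τ) > 0 and V(τ) < 1, one has the identity Z2' = (5γ−6)(3−2A v1)·Z2. -/

import Mathlib

noncomputable section

namespace BianchiVI

/-- squared tilt speed `V² = v1² + v2² + v3²`. -/
def Vsq (v1 v2 v3 : ℝ) : ℝ := v1^2 + v2^2 + v3^2

/-- `G₊ = 1 + (γ-1) V²`. -/
def Gp (γ v1 v2 v3 : ℝ) : ℝ := 1 + (γ - 1) * Vsq v1 v2 v3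

/-- total shear `Σ²`. -/
def Sig2 (sp sm s12 s13 s23 : ℝ) : ℝ := sp^2 + sm^2 + s12^2 + s13^2 + s23^2

/-- deceleration parameter `q`. -/
def qdef (γ sp sm s12 s13 s23 Om v1 v2 v3 : ℝ) : ℝ :=
  2 * Sig2 sp sm s12 s13 s23
    + (1/2) * ((3*γ - 2) + (2 - γ) * Vsq v1 v2 v3) * Om / Gp γ v1 v2 v3

/-- `P = Σ_{ab} v^a v^b · V²`, so that `S = P/V²`. -/
def Pdef (sp sm s12 s13 s23 v1 v2 v3 : ℝ) : ℝ :=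
  -2*sp*v1^2 + (sp + Real.sqrt 3 * sm) * v2^2 + (sp - Real.sqrt 3 * sm) * v3^2
    + 2*Real.sqrt 3*(s12*v1*v2 + s13*v1*v3 + s23*v2*v3)

/-- `S = Σ_{ab} c^a c^b`. -/
def Sdef (sp sm s12 s13 s23 v1 v2 v3 : ℝ) : ℝ :=
  if 0 < Vsq v1 v2 v3 then Pdef sp sm s12 s13 s23 v1 v2 v3 / Vsq v1 v2 v3 else 0

/-- the quantity `T`. -/
def Tdef (γ sp sm s12 s13 s23 A v1 v2 v3 : ℝ) : ℝ :=
  (((3*γ - 4) - 2*(γ-1)*A*v1) * (1 - Vsq v1 v2 v3)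
      + (2 - γ) * Pdef sp sm s12 s13 s23 v1 v2 v3)
    / (1 - (γ - 1) * Vsq v1 v2 v3)

/-- right-hand side of the evolution equation. -/
def rhsSp (γ sp sm s12 s13 s23 N lam A Om v1 v2 v3 : ℝ) : ℝ :=
  (qdef γ sp sm s12 s13 s23 Om v1 v2 v3 - 2) * sp + 3*(s12^2 + s13^2) - 2*N^2 + (γ*Om/(2*(Gp γ v1 v2 v3))) * (-2*v1^2 + v2^2 + v3^2)

/-- right-hand side of the evolution equation. -/
def rhsSm (γ sp sm s12 s13 s23 N lam A Om v1 v2 v3 : ℝ) : ℝ :=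
  (qdef γ sp sm s12 s13 s23 Om v1 v2 v3 - 2 - 2*Real.sqrt 3*s23*lam) * sm + Real.sqrt 3*(s12^2 - s13^2) + 2*A*N + (Real.sqrt 3*γ*Om/(2*(Gp γ v1 v2 v3))) * (v2^2 - v3^2)

/-- right-hand side of the evolution equation. -/
def rhsS12 (γ sp sm s12 s13 s23 N lam A Om v1 v2 v3 : ℝ) : ℝ :=
  (qdef γ sp sm s12 s13 s23 Om v1 v2 v3 - 2 - 3*sp - Real.sqrt 3*sm) * s12 - Real.sqrt 3*(s23 + sm*lam)*s13 + (Real.sqrt 3*γ*Om/(Gp γ v1 v2 v3))*v1*v2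

/-- right-hand side of the evolution equation. -/
def rhsS13 (γ sp sm s12 s13 s23 N lam A Om v1 v2 v3 : ℝ) : ℝ :=
  (qdef γ sp sm s12 s13 s23 Om v1 v2 v3 - 2 - 3*sp + Real.sqrt 3*sm) * s13 - Real.sqrt 3*(s23 - sm*lam)*s12 + (Real.sqrt 3*γ*Om/(Gp γ v1 v2 v3))*v1*v3

/-- right-hand side of the evolution equation. -/
def rhsS23 (γ sp sm s12 s13 s23 N lam A Om v1 v2 v3 : ℝ) : ℝ :=
  (qdef γ sp sm s12 s13 s23 Om v1 v2 v3 - 2) * s23 - 2*Real.sqrt 3*N^2*lam + 2*Real.sqrt 3*lam*sm^2 + 2*Real.sqrt 3*s12*s13 + (Real.sqrt 3*γ*Om/(Gp γ v1 v2 v3))*v2*v3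

/-- right-hand side of the evolution equation. -/
def rhsN (γ sp sm s12 s13 s23 N lam A Om v1 v2 v3 : ℝ) : ℝ :=
  (qdef γ sp sm s12 s13 s23 Om v1 v2 v3 + 2*sp + 2*Real.sqrt 3*s23*lam) * N

/-- right-hand side of the evolution equation. -/
def rhsLam (γ sp sm s12 s13 s23 N lam A Om v1 v2 v3 : ℝ) : ℝ :=
  2*Real.sqrt 3*s23*(1 - lam^2)

/-- right-hand side of the evolution equation. -/
def rhsA (γ sp sm s12 s13 s23 N lam A Om v1 v2 v3 : ℝ) : ℝ :=
  (qdef γ sp sm s12 s13 s23 Om v1 v2 v3 + 2*sp) * A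

/-- right-hand side of the evolution equation. -/
def rhsOm (γ sp sm s12 s13 s23 N lam A Om v1 v2 v3 : ℝ) : ℝ :=
  (Om/(Gp γ v1 v2 v3)) * (2*(qdef γ sp sm s12 s13 s23 Om v1 v2 v3) - (3*γ-2) + 2*γ*A*v1 + (2*(qdef γ sp sm s12 s13 s23 Om v1 v2 v3)*(γ-1) - (2-γ)) * Vsq v1 v2 v3 - γ*(Pdef sp sm s12 s13 s23 v1 v2 v3))

/-- right-hand side of the evolution equation. -/
def rhsV1 (γ sp sm s12 s13 s23 N lam A Om v1 v2 v3 : ℝ) : ℝ :=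
  ((Tdef γ sp sm s12 s13 s23 A v1 v2 v3) + 2*sp)*v1 - 2*Real.sqrt 3*s13*v3 - 2*Real.sqrt 3*s12*v2 - A*(v2^2 + v3^2) - Real.sqrt 3*N*(v2^2 - v3^2)

/-- right-hand side of the evolution equation. -/
def rhsV2 (γ sp sm s12 s13 s23 N lam A Om v1 v2 v3 : ℝ) : ℝ :=
  ((Tdef γ sp sm s12 s13 s23 A v1 v2 v3) - sp - Real.sqrt 3*sm)*v2 - Real.sqrt 3*(s23 + sm*lam)*v3 + Real.sqrt 3*lam*N*v1*v3 + (A + Real.sqrt 3*N)*v1*v2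

/-- right-hand side of the evolution equation. -/
def rhsV3 (γ sp sm s12 s13 s23 N lam A Om v1 v2 v3 : ℝ) : ℝ :=
  ((Tdef γ sp sm s12 s13 s23 A v1 v2 v3) - sp + Real.sqrt 3*sm)*v3 - Real.sqrt 3*(s23 - sm*lam)*v2 - Real.sqrt 3*lam*N*v1*v2 + (A - Real.sqrt 3*N)*v1*v3

/-- the five constraint equations (C1)-(C5). -/
def SatisfiesConstraints (γ sp sm s12 s13 s23 N lam A Om v1 v2 v3 : ℝ) : Prop :=
  Sig2 sp sm s12 s13 s23 + A^2 + N^2 + Om = 1 ∧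
  2*sp*A + 2*sm*N + γ*Om*v1/(Gp γ v1 v2 v3) = 0 ∧
  -(s12*(N + Real.sqrt 3*A) + s13*lam*N) + γ*Om*v2/(Gp γ v1 v2 v3) = 0 ∧
  s13*(N - Real.sqrt 3*A) + s12*lam*N + γ*Om*v3/(Gp γ v1 v2 v3) = 0 ∧
  3*A^2 = (1 - lam^2)*N^2

/-- equilibrium point: all twelve right-hand sides vanish. -/
def IsEquilibrium (γ sp sm s12 s13 s23 N lam A Om v1 v2 v3 : ℝ) : Prop :=
  rhsSp γ sp sm s12 s13 s23 N lam A Om v1 v2 v3 = 0 ∧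
  rhsSm γ sp sm s12 s13 s23 N lam A Om v1 v2 v3 = 0 ∧
  rhsS12 γ sp sm s12 s13 s23 N lam A Om v1 v2 v3 = 0 ∧
  rhsS13 γ sp sm s12 s13 s23 N lam A Om v1 v2 v3 = 0 ∧
  rhsS23 γ sp sm s12 s13 s23 N lam A Om v1 v2 v3 = 0 ∧
  rhsN γ sp sm s12 s13 s23 N lam A Om v1 v2 v3 = 0 ∧
  rhsLam γ sp sm s12 s13 s23 N lam A Om v1 v2 v3 = 0 ∧
  rhsA γ sp sm s12 s13 s23 N lam A Om v1 v2 v3 = 0 ∧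
  rhsOm γ sp sm s12 s13 s23 N lam A Om v1 v2 v3 = 0 ∧
  rhsV1 γ sp sm s12 s13 s23 N lam A Om v1 v2 v3 = 0 ∧
  rhsV2 γ sp sm s12 s13 s23 N lam A Om v1 v2 v3 = 0 ∧
  rhsV3 γ sp sm s12 s13 s23 N lam A Om v1 v2 v3 = 0

/-- a solution of the tilted Bianchi type VI_(-1/9) system on the set `dom`:
the twelve evolution equations and the five constraints hold at every `τ ∈ dom`. -/
def IsSolutionOn (γ : ℝ) (dom : Set ℝ) (sp sm s12 s13 s23 N lam A Om v1 v2 v3 : ℝ → ℝ) : Prop :=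
  ∀ τ ∈ dom,
    (HasDerivAt sp (rhsSp γ (sp τ) (sm τ) (s12 τ) (s13 τ) (s23 τ) (N τ) (lam τ) (A τ) (Om τ) (v1 τ) (v2 τ) (v3 τ)) τ ∧
    HasDerivAt sm (rhsSm γ (sp τ) (sm τ) (s12 τ) (s13 τ) (s23 τ) (N τ) (lam τ) (A τ) (Om τ) (v1 τ) (v2 τ) (v3 τ)) τ ∧
    HasDerivAt s12 (rhsS12 γ (sp τ) (sm τ) (s12 τ) (s13 τ) (s23 τ) (N τ) (lam τ) (A τ) (Om τ) (v1 τ) (v2 τ) (v3 τ)) τ ∧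
    HasDerivAt s13 (rhsS13 γ (sp τ) (sm τ) (s12 τ) (s13 τ) (s23 τ) (N τ) (lam τ) (A τ) (Om τ) (v1 τ) (v2 τ) (v3 τ)) τ ∧
    HasDerivAt s23 (rhsS23 γ (sp τ) (sm τ) (s12 τ) (s13 τ) (s23 τ) (N τ) (lam τ) (A τ) (Om τ) (v1 τ) (v2 τ) (v3 τ)) τ ∧
    HasDerivAt N (rhsN γ (sp τ) (sm τ) (s12 τ) (s13 τ) (s23 τ) (N τ) (lam τ) (A τ) (Om τ) (v1 τ) (v2 τ) (v3 τ)) τ ∧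
    HasDerivAt lam (rhsLam γ (sp τ) (sm τ) (s12 τ) (s13 τ) (s23 τ) (N τ) (lam τ) (A τ) (Om τ) (v1 τ) (v2 τ) (v3 τ)) τ ∧
    HasDerivAt A (rhsA γ (sp τ) (sm τ) (s12 τ) (s13 τ) (s23 τ) (N τ) (lam τ) (A τ) (Om τ) (v1 τ) (v2 τ) (v3 τ)) τ ∧
    HasDerivAt Om (rhsOm γ (sp τ) (sm τ) (s12 τ) (s13 τ) (s23 τ) (N τ) (lam τ) (A τ) (Om τ) (v1 τ) (v2 τ) (v3 τ)) τ ∧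
    HasDerivAt v1 (rhsV1 γ (sp τ) (sm τ) (s12 τ) (s13 τ) (s23 τ) (N τ) (lam τ) (A τ) (Om τ) (v1 τ) (v2 τ) (v3 τ)) τ ∧
    HasDerivAt v2 (rhsV2 γ (sp τ) (sm τ) (s12 τ) (s13 τ) (s23 τ) (N τ) (lam τ) (A τ) (Om τ) (v1 τ) (v2 τ) (v3 τ)) τ ∧
    HasDerivAt v3 (rhsV3 γ (sp τ) (sm τ) (s12 τ) (s13 τ) (s23 τ) (N τ) (lam τ) (A τ) (Om τ) (v1 τ) (v2 τ) (v3 τ)) τ) ∧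
    SatisfiesConstraints γ (sp τ) (sm τ) (s12 τ) (s13 τ) (s23 τ) (N τ) (lam τ) (A τ) (Om τ) (v1 τ) (v2 τ) (v3 τ)

/-- `D̂ = λ(Σ12² + Σ13²) + 2 Σ12 Σ13`. -/
def Dhat (lam s12 s13 : ℝ) : ℝ := lam*(s12^2 + s13^2) + 2*s12*s13

/-- the monotone function `Z2`. -/
def Z2fun (γ : ℝ) (s12 s13 N lam A Om v1 v2 v3 : ℝ → ℝ) : ℝ → ℝ := fun τ =>
  (A τ)^4 * (N τ)^2 * (Gp γ (v1 τ) (v2 τ) (v3 τ))^5 * (Dhat (lam τ) (s12 τ) (s13 τ))^2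
    / ((1 - Vsq (v1 τ) (v2 τ) (v3 τ)) ^ ((5*(2-γ)/2 : ℝ)) * (Om τ)^5)

set_option maxHeartbeats 4000000 in
theorem Z2_evolution (γ : ℝ) (hγ : 0 < γ ∧ γ < 2) (dom : Set ℝ)
    (sp sm s12 s13 s23 N lam A Om v1 v2 v3 : ℝ → ℝ)
    (hsol : IsSolutionOn γ dom sp sm s12 s13 s23 N lam A Om v1 v2 v3)
    (hOm : ∀ τ ∈ dom, 0 < Om τ)
    (hV : ∀ τ ∈ dom, Real.sqrt (Vsq (v1 τ) (v2 τ) (v3 τ)) < 1) :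
    ∀ τ ∈ dom,
      HasDerivAt (Z2fun γ s12 s13 N lam A Om v1 v2 v3)
        ((5*γ - 6) * (3 - 2*(A τ)*(v1 τ)) * Z2fun γ s12 s13 N lam A Om v1 v2 v3 τ) τ := by
  intro tau htau
  obtain ⟨⟨hsp, hsm, h12, h13, h23, hN, hlam, hA, hOmd, hv1, hv2, hv3⟩,
    hC1, hC2, hC3, hC4, hC5⟩ := hsol tau htau
  have hr2 : (Real.sqrt 3)^2 = 3 := Real.sq_sqrt (by norm_num)
  have hm0 : 0 ≤ Vsq (v1 tau) (v2 tau) (v3 tau) := by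
    unfold Vsq; positivity
  have hm1 : Vsq (v1 tau) (v2 tau) (v3 tau) < 1 := by
    have h := hV tau htau
    nlinarith [Real.sq_sqrt hm0, Real.sqrt_nonneg (Vsq (v1 tau) (v2 tau) (v3 tau))]
  have hW : (0:ℝ) < 1 - Vsq (v1 tau) (v2 tau) (v3 tau) := by linarith
  have hGpos : 0 < Gp γ (v1 tau) (v2 tau) (v3 tau) := by
    unfold Gp; nlinarith [hγ.1, hγ.2, hm0, hm1]
  have hHpos : 0 < 1 - (γ - 1) * Vsq (v1 tau) (v2 tau) (v3 tau) := by
    nlinarith [hγ.1, hγ.2, hm0, hm1]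
  have hOmp := hOm tau htau
  simp only [Z2fun]
  set a := A tau with ha
  set n := N tau with hn
  set l := lam tau with hl
  set x12 := s12 tau with hx12
  set x13 := s13 tau with hx13
  set x23 := s23 tau with hx23
  set xsp := sp tau with hxsp
  set xsm := sm tau with hxsm
  set om := Om tau with hom
  set x1 := v1 tau with hx1
  set x2 := v2 tau with hx2
  set x3 := v3 tau with hx3
  set R1 := rhsV1 γ xsp xsm x12 x13 x23 n l a om x1 x2 x3 with hR1
  set R2 := rhsV2 γ xsp xsm x12 x13 x23 n l a om x1 x2 x3 with hR2
  set R3 := rhsV3 γ xsp xsm x12 x13 x23 n l a om x1 x2 x3 with hR3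
  set R12 := rhsS12 γ xsp xsm x12 x13 x23 n l a om x1 x2 x3 with hR12
  set R13 := rhsS13 γ xsp xsm x12 x13 x23 n l a om x1 x2 x3 with hR13
  set RL := rhsLam γ xsp xsm x12 x13 x23 n l a om x1 x2 x3 with hRL
  set RN := rhsN γ xsp xsm x12 x13 x23 n l a om x1 x2 x3 with hRN
  set RA := rhsA γ xsp xsm x12 x13 x23 n l a om x1 x2 x3 with hRA
  set ROm := rhsOm γ xsp xsm x12 x13 x23 n l a om x1 x2 x3 with hROm
  set m := Vsq x1 x2 x3 with hm
  set q := qdef γ xsp xsm x12 x13 x23 om x1 x2 x3 with hq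
  set T := Tdef γ xsp xsm x12 x13 x23 a x1 x2 x3 with hT0
  set P := Pdef xsp xsm x12 x13 x23 x1 x2 x3 with hP
  -- derivative of V²
  have hud : HasDerivAt (fun t => Vsq (v1 t) (v2 t) (v3 t))
      (2*(x1*R1 + x2*R2 + x3*R3)) tau := by
    have h := ((hv1.pow 2).add (hv2.pow 2)).add (hv3.pow 2)
    simp only [Vsq]
    convert h using 1
    · rfl
    · rfl
    · rfl
    push_cast
    ring
  have hWd : HasDerivAt (fun t => 1 - Vsq (v1 t) (v2 t) (v3 t))
      (-(2*(x1*R1 + x2*R2 + x3*R3))) tau := hud.const_sub 1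
  have hWc : HasDerivAt (fun t => (1 - Vsq (v1 t) (v2 t) (v3 t)) ^ ((5*(2-γ)/2 : ℝ)))
      (-(2*(x1*R1 + x2*R2 + x3*R3)) * (5*(2-γ)/2) * (1 - m) ^ ((5*(2-γ)/2 : ℝ) - 1)) tau :=
    hWd.rpow_const (Or.inl (ne_of_gt hW))
  have hGd : HasDerivAt (fun t => Gp γ (v1 t) (v2 t) (v3 t))
      ((γ-1)*(2*(x1*R1 + x2*R2 + x3*R3))) tau := (hud.const_mul (γ-1)).const_add 1
  have hDd : HasDerivAt (fun t => Dhat (lam t) (s12 t) (s13 t))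
      (RL*(x12^2 + x13^2) + 2*l*(x12*R12 + x13*R13) + 2*(R12*x13 + x12*R13)) tau := by
    have h := (hlam.mul ((h12.pow 2).add (h13.pow 2))).add ((h12.const_mul 2).mul h13)
    simp only [Dhat]
    convert h using 1
    · rfl
    · rfl
    · rfl
    simp only [Pi.pow_apply, Pi.add_apply, Pi.mul_apply]
    push_cast
    ring
  have hNum := (((hA.pow 4).mul (hN.pow 2)).mul (hGd.pow 5)).mul (hDd.pow 2)
  have hDen := hWc.mul (hOmd.pow 5)
  have hDen0 : (1 - Vsq x1 x2 x3) ^ ((5*(2-γ)/2 : ℝ)) * om^5 ≠ 0 :=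
    ne_of_gt (mul_pos (Real.rpow_pos_of_pos hW _) (pow_pos hOmp 5))
  have hdiv := hNum.div hDen hDen0
  convert hdiv using 1
  · rfl
  · rfl
  · rfl
  simp only [Pi.pow_apply, Pi.add_apply, Pi.mul_apply]
  rw [← ha, ← hn, ← hl, ← hx12, ← hx13, ← hom, ← hx1, ← hx2, ← hx3, ← hm]
  have hWc0 : (1 - m) ^ ((5*(2-γ)/2 : ℝ)) ≠ 0 := ne_of_gt (Real.rpow_pos_of_pos hW _)
  have hw2 : γ*om*x2/Gp γ x1 x2 x3 = x12*(n + Real.sqrt 3*a) + x13*l*n := by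
    linarith [hC3]
  have hw3 : γ*om*x3/Gp γ x1 x2 x3 = -(x13*(n - Real.sqrt 3*a) + x12*l*n) := by
    linarith [hC4]
  have hdd' : RL*(x12^2 + x13^2) + 2*l*(x12*R12 + x13*R13) + 2*(R12*x13 + x12*R13)
      = (2*(q - 2 - 3*xsp - Real.sqrt 3*l*x23) + 6*a*x1) * Dhat l x12 x13 := by
    rw [hRL, hR12, hR13, hq]
    simp only [rhsLam, rhsS12, rhsS13, Dhat]
    linear_combination (2*(Real.sqrt 3)*x1*(l*x12 + x13)) * hw2
      + (2*(Real.sqrt 3)*x1*(l*x13 + x12)) * hw3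
      + (2*a*x1*(l*(x12^2 + x13^2) + 2*x12*x13)) * hr2
  have hu2 : 2*(x1*R1 + x2*R2 + x3*R3) = 2*(T*m - P) := by
    rw [hR1, hR2, hR3, hT0, hP, hm]
    simp only [rhsV1, rhsV2, rhsV3, Pdef, Vsq]
    ring
  have hW0 : (1:ℝ) - m ≠ 0 := ne_of_gt hW
  have hH0 : (1:ℝ) - (γ-1)*m ≠ 0 := ne_of_gt hHpos
  have hom0 : om ≠ 0 := ne_of_gt hOmp
  have hGm : Gp γ x1 x2 x3 = 1 + (γ-1)*m := rfl
  have hTH : T * (1 - (γ-1)*m) = ((3*γ-4) - 2*(γ-1)*a*x1)*(1-m) + (2-γ)*P := by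
    rw [hT0, hm, hP]
    simp only [Tdef]
    rw [div_mul_cancel₀]
    rw [← hm]
    exact hH0
  have hOmG : ROm * (1 + (γ-1)*m) = om * (2*q - (3*γ-2) + 2*γ*a*x1
      + (2*q*(γ-1) - (2-γ))*m - γ*P) := by
    have h1 : ROm = om/Gp γ x1 x2 x3 * (2*q - (3*γ-2) + 2*γ*a*x1
        + (2*q*(γ-1) - (2-γ))*m - γ*P) := by rw [hROm]; rfl
    have hG0 : (1:ℝ) + (γ-1)*m ≠ 0 := by rw [← hGm]; exact ne_of_gt hGpos
    rw [h1, hGm]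
    field_simp
  have hRA' : RA = (q + 2*xsp)*a := by rw [hRA, hq]; rfl
  have hRN' : RN = (q + 2*xsp + 2*Real.sqrt 3*x23*l)*n := by rw [hRN, hq]; rfl
  rw [hdd', hu2, hRA', hRN', hGm]
  set D0 := Dhat l x12 x13 with hD0
  set Wc := (1 - m) ^ ((5*(2-γ)/2 : ℝ)) with hWcdef
  set Wm := (1 - m) ^ ((5*(2-γ)/2 : ℝ) - 1) with hWmdef
  have hWm : Wm * (1 - m) = Wc := by
    rw [hWmdef, hWcdef]
    nth_rewrite 2 [← Real.rpow_one (1-m)]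
    rw [← Real.rpow_add hW]
    norm_num
  have hkey : (((4*a^3*((q + 2*xsp)*a)*n^2 + a^4*(2*n*((q + 2*xsp + 2*Real.sqrt 3*x23*l)*n)))
          * (1 + (γ-1)*m)^5
        + a^4*n^2*(5*(1 + (γ-1)*m)^4*((γ-1)*(2*(T*m - P)))))*D0^2
      + a^4*n^2*(1 + (γ-1)*m)^5*(2*D0*((2*(q - 2 - 3*xsp - Real.sqrt 3*l*x23) + 6*a*x1)*D0)))
        * ((1-m)*om)
      = ((5*γ-6)*(3 - 2*a*x1)*((1-m)*om) - (5*(2-γ)/2)*(2*(T*m - P))*om + 5*(1-m)*ROm)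
        * (a^4*n^2*(1 + (γ-1)*m)^5*D0^2) := by
    linear_combination (5*γ*m*om*(a^4*n^2*(1 + (γ-1)*m)^4*D0^2)) * hTH
      + (-5*(1-m)*(a^4*n^2*(1 + (γ-1)*m)^4*D0^2)) * hOmG
  have hden : Wc * om^5 ≠ 0 := mul_ne_zero hWc0 (pow_ne_zero 5 hom0)
  rw [← mul_div_assoc]
  rw [div_eq_div_iff hden (pow_ne_zero 2 hden)]
  refine mul_right_cancel₀ hW0 ?_
  linear_combination (-(Wc^2*om^9))*hkey
    + (-(5*(2-γ)/2)*(2*(T*m-P))*(a^4*n^2*(1+(γ-1)*m)^5*D0^2)*Wc*om^10)*hWm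

end BianchiVI
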